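/- arXiv:1108.3425 — 4 statements merged into one kernel-verified Lean document; each statement's English description precedes it below -/
import Mathlib

section
/- Let U = [[1,1],[0,1]] and L = [[1,0],[1,1]]. Let (n_1, …, n_k) be a list of integers with k ≥ 2, n_1 ≥ 0, and n_i ≥ 1 for 2 ≤ i ≤ k. Form the matrix M = X^{n_k−1} ⋯ U^{n_2} L^{n_1} · [[1,0],[0,−1]], where the word alternates between powers of L (odd-indexed blocks) and powers of U (even-indexed blocks) and X = U if k is even, X = L if k is odd. Write M = [[p,q],[r,s]]. Then ps − qr = −1, the first-column entries p, r are nonnegative with p + r ≥ 1, the second-column entries q, s are nonpositive with q + s ≤ −1, gcd(p+r, −(q+s)) = 1, and (p+r)/(q+s) = −[n_1,…,n_k], where [n_1,…,n_k] = n_1 + 1/(n_2 + 1/(⋯ + 1/n_k)). -/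
/-- The base matrices: `B true = L = [[1,0],[1,1]]`, `B false = U = [[1,1],[0,1]]`. -/
def B (b : Bool) : Matrix (Fin 2) (Fin 2) ℤ :=
  if b then !![1, 0; 1, 1] else !![1, 1; 0, 1]

/-- The alternating word matrix `X^{n_k - 1} ⋯ U^{n_2} L^{n_1}`, where block `i` uses `L`
if `i` is odd and `U` if `i` is even, and the final block's exponent is `n_k - 1`.
Start with `b = true` (so the first block uses `L`). -/
def wordAux : Bool → List ℕ → Matrix (Fin 2) (Fin 2) ℤ
  | _, [] => 1
  | b, [n] => B b ^ (n - 1)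
  | b, n :: rest => wordAux (!b) rest * B b ^ n

/-- The continued fraction `[n_1, …, n_k] = n_1 + 1/(n_2 + 1/(⋯ + 1/n_k))`. -/
def cf : List ℕ → ℚ
  | [] => 0
  | [n] => (n : ℚ)
  | n :: rest => (n : ℚ) + (cf rest)⁻¹

lemma Bpow_true (n : ℕ) : B true ^ n = !![1, 0; (n:ℤ), 1] := by
  induction n with
  | zero => simp [Matrix.one_fin_two]
  | succ n ih =>
    rw [pow_succ, ih, show B true = !![1,0;1,1] from rfl, Matrix.mul_fin_two]
    push_cast; norm_num [add_comm]

lemma Bpow_false (n : ℕ) : B false ^ n = !![1, (n:ℤ); 0, 1] := by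
  induction n with
  | zero => simp [Matrix.one_fin_two]
  | succ n ih =>
    rw [pow_succ, ih, show B false = !![1,1;0,1] from rfl, Matrix.mul_fin_two]
    push_cast; norm_num [add_comm]

lemma key : ∀ (l : List ℕ) (b : Bool), l ≠ [] → (∀ n ∈ l.tail, 1 ≤ n) →
    (∀ n, l = [n] → 1 ≤ n) →
    (∀ i j, 0 ≤ wordAux b l i j) ∧ (wordAux b l).det = 1 ∧
    1 ≤ wordAux b l 0 0 + wordAux b l 1 0 ∧ 1 ≤ wordAux b l 0 1 + wordAux b l 1 1 ∧
    cf l * ((if b then wordAux b l 0 1 + wordAux b l 1 1 else wordAux b l 0 0 + wordAux b l 1 0 : ℤ) : ℚ)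
      = ((if b then wordAux b l 0 0 + wordAux b l 1 0 else wordAux b l 0 1 + wordAux b l 1 1 : ℤ) : ℚ)
  | [], _, h, _, _ => absurd rfl h
  | [n], b, _, _, hsing => by
    have hn : 1 ≤ n := hsing n rfl
    have h1 : ((n - 1 : ℕ) : ℤ) = (n : ℤ) - 1 := by
      have := Nat.cast_sub hn (R := ℤ); simpa using this
    cases b
    · have hW : wordAux false [n] = !![1, ((n-1:ℕ):ℤ); 0, 1] := by
        simp [wordAux, Bpow_false]
      rw [hW]
      refine ⟨?_, ?_, ?_, ?_, ?_⟩
      · intro i j; fin_cases i <;> fin_cases j <;> simp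
      · simp [Matrix.det_fin_two_of]
      · simp
      · simp [h1]; omega
      · simp [cf, h1]
    · have hW : wordAux true [n] = !![1, 0; ((n-1:ℕ):ℤ), 1] := by
        simp [wordAux, Bpow_true]
      rw [hW]
      refine ⟨?_, ?_, ?_, ?_, ?_⟩
      · intro i j; fin_cases i <;> fin_cases j <;> simp
      · simp [Matrix.det_fin_two_of]
      · simp [h1]; omega
      · simp
      · simp [cf, h1]
  | n :: m :: rest, b, _, htail, _ => by
    obtain ⟨hnn, hdet, ha, hc, hcf⟩ := key (m :: rest) (!b) (by simp)
      (fun x hx => htail x (List.mem_cons_of_mem _ hx))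
      (fun x hx => by simp at hx; exact htail x (by simp [hx.1]))
    set V := wordAux (!b) (m :: rest) with hV
    have hane : ((V 0 0 + V 1 0 : ℤ) : ℚ) ≠ 0 := by
      have : (0:ℤ) < V 0 0 + V 1 0 := ha
      positivity
    have hcne : ((V 0 1 + V 1 1 : ℤ) : ℚ) ≠ 0 := by
      have : (0:ℤ) < V 0 1 + V 1 1 := hc
      positivity
    have hh : cf (n :: m :: rest) = (n : ℚ) + (cf (m :: rest))⁻¹ := rfl
    cases b
    · -- b = false : multiply by U^n on the right
      simp only [Bool.not_false] at hV hcf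
      have hW : wordAux false (n :: m :: rest) = V * !![1, (n:ℤ); 0, 1] := by
        rw [show wordAux false (n :: m :: rest) = wordAux true (m :: rest) * B false ^ n
          from rfl, Bpow_false, ← hV]
      rw [hW]
      set W := V * !![1, (n:ℤ); 0, 1] with hWdef
      have e0 : ∀ i, W i 0 = V i 0 := by
        intro i; simp [hWdef, Matrix.mul_apply, Fin.sum_univ_two]
      have e1 : ∀ i, W i 1 = V i 0 * n + V i 1 := by
        intro i; simp [hWdef, Matrix.mul_apply, Fin.sum_univ_two]
      simp only [if_true, if_false] at hcf ⊢
      have hcfval : cf (m :: rest) = ((V 0 0 + V 1 0 : ℤ) : ℚ) / ((V 0 1 + V 1 1 : ℤ) : ℚ) := by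
        rw [eq_div_iff hcne]; exact hcf
      refine ⟨?_, ?_, ?_, ?_, ?_⟩
      · intro i j
        fin_cases j
        · simpa [e0] using hnn i 0
        · simpa [e1] using add_nonneg (mul_nonneg (hnn i 0) (by positivity)) (hnn i 1)
      · rw [hWdef, Matrix.det_mul, hdet, Matrix.det_fin_two_of]; ring
      · rw [e0, e0]; exact ha
      · have := mul_nonneg (add_nonneg (hnn 0 0) (hnn 1 0)) (Int.ofNat_nonneg n)
        rw [e1, e1]; linarith
      · rw [hh, hcfval]
        simp only [e0, e1]
        rw [inv_div]
        push_cast at hane hcne ⊢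
        field_simp
        ring
    · -- b = true : multiply by L^n on the right
      simp only [Bool.not_true] at hV hcf
      have hW : wordAux true (n :: m :: rest) = V * !![1, 0; (n:ℤ), 1] := by
        rw [show wordAux true (n :: m :: rest) = wordAux false (m :: rest) * B true ^ n
          from rfl, Bpow_true, ← hV]
      rw [hW]
      set W := V * !![1, 0; (n:ℤ), 1] with hWdef
      have e0 : ∀ i, W i 0 = V i 0 + V i 1 * n := by
        intro i; simp [hWdef, Matrix.mul_apply, Fin.sum_univ_two]
      have e1 : ∀ i, W i 1 = V i 1 := by
        intro i; simp [hWdef, Matrix.mul_apply, Fin.sum_univ_two]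
      simp only [if_true, if_false] at hcf ⊢
      have hcfval : cf (m :: rest) = ((V 0 1 + V 1 1 : ℤ) : ℚ) / ((V 0 0 + V 1 0 : ℤ) : ℚ) := by
        rw [eq_div_iff hane]; exact hcf
      refine ⟨?_, ?_, ?_, ?_, ?_⟩
      · intro i j
        fin_cases j
        · simpa [e0] using add_nonneg (hnn i 0) (mul_nonneg (hnn i 1) (by positivity))
        · simpa [e1] using hnn i 1
      · rw [hWdef, Matrix.det_mul, hdet, Matrix.det_fin_two_of]; ring
      · have := mul_nonneg (add_nonneg (hnn 0 1) (hnn 1 1)) (Int.ofNat_nonneg n)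
        rw [e0, e0]; linarith
      · rw [e1, e1]; exact hc
      · rw [hh, hcfval]
        simp only [e0, e1]
        rw [inv_div]
        push_cast at hane hcne ⊢
        field_simp
        ring

theorem stmt_5 (ns : List ℕ) (hlen : 2 ≤ ns.length)
    (htail : ∀ n ∈ ns.tail, 1 ≤ n) :
    let M := wordAux true ns * !![(1 : ℤ), 0; 0, -1]
    let p := M 0 0; let q := M 0 1; let r := M 1 0; let s := M 1 1
    p * s - q * r = -1 ∧
    0 ≤ p ∧ 0 ≤ r ∧ 1 ≤ p + r ∧
    q ≤ 0 ∧ s ≤ 0 ∧ q + s ≤ -1 ∧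
    Int.gcd (p + r) (-(q + s)) = 1 ∧
    ((p + r : ℤ) : ℚ) / ((q + s : ℤ) : ℚ) = -cf ns := by
  intro M p q r s
  have hne : ns ≠ [] := by intro h; simp [h] at hlen
  have hsing : ∀ n, ns = [n] → 1 ≤ n := by
    intro n h; simp [h] at hlen
  obtain ⟨hnn, hdet, ha, hc, hcf⟩ := key ns true hne htail hsing
  set W := wordAux true ns with hWdef
  simp only [if_true] at hcf
  have hp : p = W 0 0 := by
    show M 0 0 = W 0 0
    simp [M, Matrix.mul_apply, Fin.sum_univ_two]
    rfl
  have hq : q = -W 0 1 := by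
    show M 0 1 = -W 0 1
    simp [M, Matrix.mul_apply, Fin.sum_univ_two]
    rfl
  have hr : r = W 1 0 := by
    show M 1 0 = W 1 0
    simp [M, Matrix.mul_apply, Fin.sum_univ_two]
    rfl
  have hs : s = -W 1 1 := by
    show M 1 1 = -W 1 1
    simp [M, Matrix.mul_apply, Fin.sum_univ_two]
    rfl
  rw [Matrix.det_fin_two] at hdet
  have hcne : ((W 0 1 + W 1 1 : ℤ) : ℚ) ≠ 0 := by
    have : (0:ℤ) < W 0 1 + W 1 1 := hc
    positivity
  refine ⟨?_, ?_, ?_, ?_, ?_, ?_, ?_, ?_, ?_⟩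
  · rw [hp, hq, hr, hs]; linarith
  · rw [hp]; exact hnn 0 0
  · rw [hr]; exact hnn 1 0
  · rw [hp, hr]; exact ha
  · rw [hq]; linarith [hnn 0 1]
  · rw [hs]; linarith [hnn 1 1]
  · rw [hq, hs]; omega
  · rw [hp, hq, hr, hs]
    rw [← Int.isCoprime_iff_gcd_eq_one]
    refine ⟨W 1 1, -(W 1 0), ?_⟩
    ring_nf
    linarith
  · rw [hp, hq, hr, hs]
    have : ((W 0 0 + W 1 0 : ℤ) : ℚ) = cf ns * ((W 0 1 + W 1 1 : ℤ) : ℚ) := hcf.symm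
    push_cast at this hcne ⊢
    have hne2 : (-(W 0 1 : ℚ) + -(W 1 1 : ℚ)) ≠ 0 := by intro h; apply hcne; linarith
    rw [div_eq_iff hne2]
    linear_combination this
end

section
/- Let p, q, r, s be positive integers with ps − qr = 1, and let m, n be nonzero integers. If 2s(p+r) + 1/m = 2q(p+r) + 1/n in the rational numbers, then m = n, q = s = 1, and p = r + 1. -/
/-- Lift-λ versus lift-ρ: if `p, q, r, s` are positive with `p*s - q*r = 1` and the slopes
`2s(p+r) + 1/m` and `2q(p+r) + 1/n` coincide in `ℚ` for nonzero integers `m`, `n`, then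
`m = n`, `q = s = 1`, and `p = r + 1`. -/
theorem stmt_12 (p q r s : ℤ) (hp : 0 < p) (hq : 0 < q) (hr : 0 < r) (hs : 0 < s)
    (hdet : p * s - q * r = 1)
    (m n : ℤ) (hm : m ≠ 0) (hn : n ≠ 0)
    (heq : ((2 * s * (p + r) : ℤ) : ℚ) + 1 / (m : ℚ)
         = ((2 * q * (p + r) : ℤ) : ℚ) + 1 / (n : ℚ)) :
    m = n ∧ q = 1 ∧ s = 1 ∧ p = r + 1 := by
  have hmQ : (m : ℚ) ≠ 0 := Int.cast_ne_zero.mpr hm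
  have hnQ : (n : ℚ) ≠ 0 := Int.cast_ne_zero.mpr hn
  have key : n - m = 2 * (q - s) * (p + r) * m * n := by
    have : ((n - m : ℤ) : ℚ) = ((2 * (q - s) * (p + r) * m * n : ℤ) : ℚ) := by
      push_cast
      field_simp at heq
      push_cast at heq
      linarith
    exact_mod_cast this
  have hqs : q = s := by
    by_contra hne
    have hd : 1 ≤ |q - s| := Int.one_le_abs (sub_ne_zero.mpr hne)
    have ham : 1 ≤ |m| := Int.one_le_abs hm
    have han : 1 ≤ |n| := Int.one_le_abs hn
    have hpr : 2 ≤ p + r := by omega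
    have h1 : |n - m| = |2 * (q - s) * (p + r) * m * n| := by rw [key]
    have h2 : |n - m| ≤ |m| + |n| := by
      calc |n - m| ≤ |n| + |m| := abs_sub _ _
        _ = |m| + |n| := by ring
    have h3 : |2 * (q - s) * (p + r) * m * n|
        = 2 * |q - s| * |p + r| * |m| * |n| := by
      simp [abs_mul]
    have hpr' : (2 : ℤ) ≤ |p + r| := le_trans hpr (le_abs_self _)
    have h4 : 4 * (|m| * |n|) ≤ 2 * |q - s| * |p + r| * |m| * |n| := by
      nlinarith [mul_le_mul hd hpr' (by omega : (0:ℤ) ≤ 2) (by omega : (0:ℤ) ≤ |q - s|),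
        mul_pos (lt_of_lt_of_le one_pos ham) (lt_of_lt_of_le one_pos han)]
    have h5 : |m| + |n| ≤ 2 * (|m| * |n|) := by nlinarith [mul_le_mul ham han (by omega : (0:ℤ) ≤ 1) (by omega : (0:ℤ) ≤ |m|)]
    have h6 : (1:ℤ) ≤ |m| * |n| := one_le_mul_of_one_le_of_one_le ham han
    omega
  subst hqs
  have hmn : m = n := by
    have : n - m = 0 := by rw [key]; ring
    omega
  have hqp : q * (p - r) = 1 := by ring_nf; linarith [hdet]
  have hq1 : q = 1 := Int.eq_one_of_mul_eq_one_right hq.le hqp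
  refine ⟨hmn, hq1, hq1, by nlinarith [hqp, hq1]⟩
end

section
/- Let p, q, r, s be positive integers with ps − qr = 1 and p + r > q + s, and let m, n be nonzero integers. If 2s(p+r) + 1/m = 2p(q+s) + 1/n in the rational numbers, then q = s = 1, p = r + 1, m = 1, and n = −1. -/
/-- Lift-λ versus drop-ρ: if `p, q, r, s` are positive with `p*s - q*r = 1` and
`p + r > q + s`, and the slopes `2s(p+r) + 1/m` and `2p(q+s) + 1/n` coincide in `ℚ` for
nonzero integers `m`, `n`, then `q = 1`, `s = 1`, `p = r + 1`, `m = 1`, and `n = -1`. -/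
theorem stmt_13 (p q r s : ℤ) (hp : 0 < p) (hq : 0 < q) (hr : 0 < r) (hs : 0 < s)
    (hdet : p * s - q * r = 1) (hnorm : p + r > q + s)
    (m n : ℤ) (hm : m ≠ 0) (hn : n ≠ 0)
    (heq : ((2 * s * (p + r) : ℤ) : ℚ) + 1 / (m : ℚ)
         = ((2 * p * (q + s) : ℤ) : ℚ) + 1 / (n : ℚ)) :
    q = 1 ∧ s = 1 ∧ p = r + 1 ∧ m = 1 ∧ n = -1 := by
  have hm' : (m : ℚ) ≠ 0 := Int.cast_ne_zero.mpr hm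
  have hn' : (n : ℚ) ≠ 0 := Int.cast_ne_zero.mpr hn
  obtain ⟨k, hk⟩ : ∃ k : ℤ, k = p * q - r * s := ⟨_, rfl⟩
  have key : 2 * k * (m * n) = n - m := by
    have : ((2 * (p * q - r * s) * (m * n) : ℤ) : ℚ) = ((n - m : ℤ) : ℚ) := by
      field_simp at heq
      push_cast at heq
      push_cast
      ring_nf
      ring_nf at heq
      linarith
    rw [hk]
    exact_mod_cast this
  have hmn : m ∣ n := ⟨2 * k * n + 1, by linear_combination -key⟩
  have hnm : n ∣ m := ⟨1 - 2 * k * m, by linear_combination key⟩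
  have habs : m = n ∨ m = -n := by
    have h1 := Int.natAbs_dvd_natAbs.mpr hmn
    have h2 := Int.natAbs_dvd_natAbs.mpr hnm
    exact Int.natAbs_eq_natAbs_iff.mp (Nat.dvd_antisymm h1 h2)
  rcases habs with h | h
  · -- m = n : k = 0, pq = rs, contradiction
    exfalso
    subst h
    have hk0 : k = 0 := by
      have h0 : 2 * k * (m * m) = 0 := by linarith
      rcases mul_eq_zero.mp h0 with h' | h'
      · omega
      · exact absurd (mul_self_eq_zero.mp h') hm
    have hpq : p * q = r * s := by rw [hk0] at hk; linarith
    have h3 : r * (s * s - q * q) = q := by linear_combination q * hdet - s * hpq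
    rcases le_or_gt s q with hle | hlt
    · nlinarith [mul_pos hr hq]
    · have h4 : 0 < r * (s - q) := mul_pos hr (by omega)
      nlinarith [h4]
  · -- m = -n
    subst h
    have h4 : n * (k * n + 1) = 0 := by
      have h4' : 2 * (n * (k * n + 1)) = 0 := by linear_combination -key
      linarith
    have h5 : k * n = -1 := by
      rcases mul_eq_zero.mp h4 with h' | h'
      · exact absurd h' hn
      · linarith
    have hku : k = 1 ∨ k = -1 :=
      Int.isUnit_iff.mp (IsUnit.of_mul_eq_one (a := k) (-n) (by linarith))
    rcases hku with hk1 | hk1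
    · -- k = 1: the good case
      have hn1 : n = -1 := by rw [hk1, one_mul] at h5; exact h5
      have hk' : p * q - r * s = 1 := by rw [hk1] at hk; linarith
      have hqs0 : (p + r) * (q - s) = 0 := by linear_combination hk' - hdet
      have hqs : q = s := by
        rcases mul_eq_zero.mp hqs0 with h' | h' <;> omega
      subst hqs
      have h7 : q * (p - r) = 1 := by linear_combination hdet
      have hq1 : q = 1 := by
        rcases Int.isUnit_iff.mp (IsUnit.of_mul_eq_one (a := q) (p - r) h7) with h' | h' <;> omega
      rw [hq1, one_mul] at h7
      exact ⟨hq1, hq1, by omega, by omega, hn1⟩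
    · -- k = -1: contradiction with normalization
      exfalso
      have hk' : p * q - r * s = -1 := by rw [hk1] at hk; linarith
      have h8 : (p + r) * (s - q) = 2 := by linear_combination hdet - hk'
      rcases le_or_gt s q with hle | hlt
      · nlinarith [mul_nonneg (by omega : (0:ℤ) ≤ p + r) (by omega : (0:ℤ) ≤ q - s)]
      · have h9 : 4 ≤ p + r := by omega
        have h10 : 1 ≤ s - q := by omega
        nlinarith [h8, h9, h10]
end

section
/- Let p, q, r, s be positive integers with ps − qr = 1 and p + r > q + s, and let m, n be nonzero integers. If 2r(q+s) + 1/m = 2q(p+r) + 1/n in the rational numbers, then q = s = 1, p = r + 1, m = 1, and n = −1. -/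
/-- Drop-λ versus lift-ρ: if `p, q, r, s` are positive with `p*s - q*r = 1` and
`p + r > q + s`, and the slopes `2r(q+s) + 1/m` and `2q(p+r) + 1/n` coincide in `ℚ` for
nonzero integers `m`, `n`, then `q = s = 1`, `p = r + 1`, `m = 1`, and `n = -1`. -/
theorem stmt_14 (p q r s : ℤ) (hp : 0 < p) (hq : 0 < q) (hr : 0 < r) (hs : 0 < s)
    (hdet : p * s - q * r = 1) (hnorm : p + r > q + s)
    (m n : ℤ) (hm : m ≠ 0) (hn : n ≠ 0)
    (heq : ((2 * r * (q + s) : ℤ) : ℚ) + 1 / (m : ℚ)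
         = ((2 * q * (p + r) : ℤ) : ℚ) + 1 / (n : ℚ)) :
    q = 1 ∧ s = 1 ∧ p = r + 1 ∧ m = 1 ∧ n = -1 := by
  have hmQ : (m : ℚ) ≠ 0 := Int.cast_ne_zero.mpr hm
  have hnQ : (n : ℚ) ≠ 0 := Int.cast_ne_zero.mpr hn
  set k : ℤ := q * p - r * s with hk
  -- derive the key integer equation n - m = 2 * k * m * n
  have h1 : (1 : ℚ) / m - 1 / n = ((2 * k : ℤ) : ℚ) := by
    push_cast [hk] at heq ⊢
    ring_nf at heq ⊢
    linarith
  have h2 : ((n - m : ℤ) : ℚ) = ((2 * k * m * n : ℤ) : ℚ) := by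
    field_simp at h1
    push_cast
    push_cast at h1
    linear_combination h1
  have h3 : n - m = 2 * k * m * n := by exact_mod_cast h2
  have hk' : q * p - r * s = k := hk.symm
  clear heq h1 h2 hmQ hnQ
  -- bound k
  have hm1 : 1 ≤ |m| := Int.one_le_abs hm
  have hn1 : 1 ≤ |n| := Int.one_le_abs hn
  have habs : |n - m| ≤ |m| + |n| := by
    calc |n - m| ≤ |n| + |m| := abs_sub _ _
    _ = |m| + |n| := by ring
  have habs2 : |2 * k * m * n| = 2 * |k| * (|m| * |n|) := by
    rw [abs_mul, abs_mul, abs_mul]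
    simp [abs_of_nonneg, mul_assoc]
  have hkle : |k| ≤ 1 := by
    by_contra h
    push_neg at h
    have h4 : 2 ≤ |k| := h
    have := habs
    rw [h3, habs2] at this
    nlinarith [mul_le_mul hm1 hn1 (by linarith) (abs_nonneg m)]
  have hkcase : k = -1 ∨ k = 0 ∨ k = 1 := by
    have := abs_le.mp hkle
    omega
  rcases hkcase with hk1 | hk0 | hk1
  · -- k = -1 : contradiction
    exfalso
    have h3' : n - m = -(2 * m * n) := by rw [hk1] at h3; linarith [h3]
    have hdvd1 : n ∣ m := ⟨1 + 2 * m, by linear_combination -h3'⟩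
    have hdvd2 : m ∣ n := ⟨1 - 2 * n, by linear_combination h3'⟩
    have hassoc := Int.associated_iff.mp (associated_of_dvd_dvd hdvd2 hdvd1)
    rcases hassoc with hmn | hmn
    · rw [hmn] at h3'
      have hz : n * n = 0 := by linarith
      exact hn (mul_self_eq_zero.mp hz)
    · rw [hmn] at h3'
      have hz : n * (n - 1) = 0 := by nlinarith [h3']
      have hn1' : n = 1 := by
        rcases mul_eq_zero.mp hz with h | h
        · omega
        · omega
      -- now q*p - r*s = -1; combined with det: p = r, then p = 1, contradiction
      have hk1' : q * p - r * s = -1 := by rw [hk']; exact hk1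
      have h5 : (p - r) * (s + q) = 0 := by linear_combination hdet + hk1'
      have h6 : p = r := by
        rcases mul_eq_zero.mp h5 with h | h
        · omega
        · omega
      have h7 : p * (s - q) = 1 := by linear_combination hdet - q * h6
      rcases Int.mul_eq_one_iff_eq_one_or_neg_one.mp h7 with ⟨hp1, hsq⟩ | ⟨hp1, _⟩
      · omega
      · omega
  · -- k = 0 : contradiction
    exfalso
    have hqp : q * p = r * s := by omega
    have hcop_pr : IsCoprime p r := ⟨s, -q, by linarith [hdet]⟩
    have hcop_sq : IsCoprime s q := ⟨p, -r, by linarith [hdet]⟩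
    have hps : p ∣ s := by
      have : p ∣ r * s := ⟨q, by linarith [hqp]⟩
      exact hcop_pr.dvd_of_dvd_mul_left this
    have hsp : s ∣ p := by
      have : s ∣ q * p := ⟨r, by linarith [hqp]⟩
      exact hcop_sq.dvd_of_dvd_mul_left this
    have hpeqs : p = s := Int.dvd_antisymm (le_of_lt hp) (le_of_lt hs) hps hsp
    have hqr : q = r := by
      rw [hpeqs] at hqp
      have := mul_right_cancel₀ (ne_of_gt hs) hqp
      omega
    rw [hpeqs, hqr] at hdet
    have hfac : (s - r) * (s + r) = 1 := by nlinarith [hdet]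
    rcases Int.mul_eq_one_iff_eq_one_or_neg_one.mp hfac with ⟨_, h⟩ | ⟨_, h⟩
    · omega
    · omega
  · -- k = 1 : the real case
    have h3' : n - m = 2 * m * n := by rw [hk1] at h3; linarith [h3]
    have hdvd1 : n ∣ m := ⟨1 - 2 * m, by linear_combination -h3'⟩
    have hdvd2 : m ∣ n := ⟨1 + 2 * n, by linear_combination h3'⟩
    have hassoc := Int.associated_iff.mp (associated_of_dvd_dvd hdvd2 hdvd1)
    have hmn : m = 1 ∧ n = -1 := by
      rcases hassoc with hmn | hmn
      · exfalso
        rw [hmn] at h3'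
        have hz : n * n = 0 := by linarith
        exact hn (mul_self_eq_zero.mp hz)
      · rw [hmn] at h3'
        have hz : n * (n + 1) = 0 := by nlinarith [h3']
        rcases mul_eq_zero.mp hz with h | h
        · omega
        · constructor <;> omega
    have hk1' : q * p - r * s = 1 := by rw [hk']; exact hk1
    have h5 : (p + r) * (s - q) = 0 := by linear_combination hdet - hk1'
    have h6 : s = q := by
      rcases mul_eq_zero.mp h5 with h | h
      · omega
      · omega
    have h7 : s * (p - r) = 1 := by linear_combination hdet - r * h6
    rcases Int.mul_eq_one_iff_eq_one_or_neg_one.mp h7 with ⟨hs1, hpr⟩ | ⟨hs1, _⟩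
    · exact ⟨by omega, hs1, by omega, hmn.1, hmn.2⟩
    · omega
end
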